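/- For every k ≥ 2 there is a group isomorphism π_k(Conf₃(ℝ³)) ≅ π_k(Conf₂(ℝ³)) × π_k(ℝ³ ∖ {q₁, q₂}), where the homotopy groups are taken at the basepoints (q₁, q₂, q₃), (q₁, q₂) and q₃ respectively. -/

import Mathlib

open Metric Topology

noncomputable section

abbrev E3 : Type := EuclideanSpace ℝ (Fin 3)

/-- `e = (1,0,0) ∈ ℝ³`. -/
def e : E3 := EuclideanSpace.single (0 : Fin 3) (1 : ℝ)

def q1 : E3 := 0
def q2 : E3 := (4 : ℝ) • e
def q3 : E3 := (8 : ℝ) • e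

lemma q1_ne_q2 : q1 ≠ q2 := by
  intro h
  have := congrFun (congrArg (fun v : E3 => (v : Fin 3 → ℝ)) h) 0
  simp [q1, q2, e, EuclideanSpace.single_apply] at this

lemma q1_ne_q3 : q1 ≠ q3 := by
  intro h
  have := congrFun (congrArg (fun v : E3 => (v : Fin 3 → ℝ)) h) 0
  simp [q1, q3, e, EuclideanSpace.single_apply] at this

lemma q2_ne_q3 : q2 ≠ q3 := by
  intro h
  have := congrFun (congrArg (fun v : E3 => (v : Fin 3 → ℝ)) h) 0
  simp [q2, q3, e, EuclideanSpace.single_apply] at this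

/-- The configuration space `Conf₃(ℝ³)`, with the subspace topology. -/
abbrev Conf3 : Type :=
  {p : E3 × E3 × E3 // p.1 ≠ p.2.1 ∧ p.1 ≠ p.2.2 ∧ p.2.1 ≠ p.2.2}

/-- The basepoint `(q₁, q₂, q₃) ∈ Conf₃(ℝ³)`. -/
def base3 : Conf3 := ⟨(q1, q2, q3), q1_ne_q2, q1_ne_q3, q2_ne_q3⟩

/-- The configuration space `Conf₂(ℝ³)`, with the subspace topology. -/
abbrev Conf2 : Type := {p : E3 × E3 // p.1 ≠ p.2}

/-- The basepoint `(q₁, q₂) ∈ Conf₂(ℝ³)`. -/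
def base2 : Conf2 := ⟨(q1, q2), q1_ne_q2⟩

/-- The fiber `ℝ³ ∖ {q₁, q₂}` of the fibration `Π₃ : Conf₃(ℝ³) → Conf₂(ℝ³)`. -/
abbrev Fib : Type := {x : E3 // x ≠ q1 ∧ x ≠ q2}

/-- The basepoint `q₃ ∈ ℝ³ ∖ {q₁, q₂}`. -/
def baseF : Fib := ⟨q3, q1_ne_q3.symm, q2_ne_q3.symm⟩


open Topology.Homotopy unitInterval

section Induced

open GenLoop

set_option linter.unusedSectionVars false

variable {N : Type} [DecidableEq N] {X Y Z : Type} [TopologicalSpace X] [TopologicalSpace Y]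
  [TopologicalSpace Z] {x : X} {y : Y}

/-- Composing a generalized loop with a based continuous map. -/
def glMap (φ : C(X, Y)) (hxy : φ x = y) (f : Ω^ N X x) : Ω^ N Y y :=
  ⟨φ.comp f.1, fun t ht => (congrArg φ (GenLoop.boundary f t ht)).trans hxy⟩

lemma glMap_apply (φ : C(X, Y)) (hxy : φ x = y) (f : Ω^ N X x) (t : I^N) :
    glMap φ hxy f t = φ (f t) := rfl

lemma glMap_homotopic (φ : C(X, Y)) (hxy : φ x = y) {f g : Ω^ N X x}
    (h : GenLoop.Homotopic f g) :
    GenLoop.Homotopic (glMap φ hxy f) (glMap φ hxy g) := by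
  obtain ⟨H⟩ := h
  exact ⟨H.compContinuousMap φ⟩

/-- The map induced on homotopy groups by a based continuous map. -/
def piMap (φ : C(X, Y)) (hxy : φ x = y) :
    HomotopyGroup N X x → HomotopyGroup N Y y :=
  Quotient.map (glMap φ hxy) (fun _ _ h => glMap_homotopic φ hxy h)

lemma piMap_mk (φ : C(X, Y)) (hxy : φ x = y) (f : Ω^ N X x) :
    piMap φ hxy (⟦f⟧ : HomotopyGroup N X x) = ⟦glMap φ hxy f⟧ := rfl

lemma glMap_transAt (φ : C(X, Y)) (hxy : φ x = y) (i : N) (f g : Ω^ N X x) :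
    glMap φ hxy (transAt i f g) = transAt i (glMap φ hxy f) (glMap φ hxy g) := by
  apply GenLoop.ext
  intro t
  show φ ((transAt i f g) t) = (transAt i (glMap φ hxy f) (glMap φ hxy g)) t
  simp only [transAt, GenLoop.coe_copy]
  rw [apply_ite φ]
  rfl

lemma piMap_mul [Nonempty N] (φ : C(X, Y)) (hxy : φ x = y)
    (a b : HomotopyGroup N X x) :
    piMap φ hxy (a * b) = piMap φ hxy a * piMap φ hxy b := by
  induction a using Quotient.inductionOn with | _ p =>
  induction b using Quotient.inductionOn with | _ q =>
  refine Eq.trans (congrArg (piMap φ hxy)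
    (HomotopyGroup.mul_spec (i := Classical.arbitrary N) (p := p) (q := q))) ?_
  refine Eq.trans ?_ (HomotopyGroup.mul_spec (i := Classical.arbitrary N)
    (p := glMap φ hxy p) (q := glMap φ hxy q)).symm
  rw [piMap_mk, glMap_transAt]

lemma piMap_one [Nonempty N] (φ : C(X, Y)) (hxy : φ x = y) :
    piMap φ hxy (1 : HomotopyGroup N X x) = 1 := by
  rw [HomotopyGroup.one_def, HomotopyGroup.one_def, piMap_mk]
  congr 1
  apply GenLoop.ext
  intro t
  show φ (GenLoop.const t) = GenLoop.const t
  simp [hxy]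

/-- The induced map as a monoid hom. -/
def piHom [Nonempty N] (φ : C(X, Y)) (hxy : φ x = y) :
    HomotopyGroup N X x →* HomotopyGroup N Y y :=
  MonoidHom.mk' (piMap φ hxy) (piMap_mul φ hxy)

end Induced

section Theta

/-- A bump function: `1` at `0`, vanishing for `s ≥ 1`, `1`-Lipschitz. -/
def bump (s : ℝ) : ℝ := max (1 - s) 0

lemma bump_zero : bump 0 = 1 := by norm_num [bump]

lemma bump_of_ge {s : ℝ} (h : 1 ≤ s) : bump s = 0 := by
  simp only [bump, max_eq_right_iff]; linarith

lemma bump_lip (a b : ℝ) : |bump a - bump b| ≤ |a - b| := by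
  have := abs_max_sub_max_le_abs (1 - a) (1 - b) 0
  calc |bump a - bump b| ≤ |(1-a) - (1-b)| := this
    _ = |b - a| := by ring_nf
    _ = |a - b| := abs_sub_comm _ _

lemma continuous_bump : Continuous bump := by
  unfold bump; fun_prop

/-- Point-pushing map: displaces `x` to `x'` and `y` to `y'`, supported near `x` and `y`. -/
def theta (x y x' y' w : E3) : E3 :=
  w + bump (‖w - x‖ * 4 / ‖x - y‖) • (x' - x) + bump (‖w - y‖ * 4 / ‖x - y‖) • (y' - y)

lemma theta_id (x y w : E3) : theta x y x y w = w := by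
  simp [theta]

lemma theta_apply_x {x y : E3} (h : x ≠ y) (x' y' : E3) : theta x y x' y' x = x' := by
  have hd : ‖x - y‖ ≠ 0 := by simpa [sub_eq_zero] using h
  have h1 : ‖x - x‖ * 4 / ‖x - y‖ = 0 := by simp
  have h2 : ‖x - y‖ * 4 / ‖x - y‖ = 4 := by
    rw [mul_comm, mul_div_assoc, div_self hd, mul_one]
  unfold theta
  rw [h1, h2, bump_zero, bump_of_ge (by norm_num)]
  module

lemma theta_apply_y {x y : E3} (h : x ≠ y) (x' y' : E3) : theta x y x' y' y = y' := by
  have hd : ‖x - y‖ ≠ 0 := by simpa [sub_eq_zero] using h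
  have h1 : ‖y - x‖ * 4 / ‖x - y‖ = 4 := by
    rw [norm_sub_rev, mul_comm, mul_div_assoc, div_self hd, mul_one]
  have h2 : ‖y - y‖ * 4 / ‖x - y‖ = 0 := by simp
  unfold theta
  rw [h1, h2, bump_zero, bump_of_ge (by norm_num)]
  module

/-- Quantitative injectivity of the point-pushing map. -/
lemma theta_inj {x y x' y' : E3} (h : x ≠ y)
    (hx' : ‖x' - x‖ ≤ ‖x - y‖ / 16) (hy' : ‖y' - y‖ ≤ ‖x - y‖ / 16)
    {a b : E3} (hab : a ≠ b) : theta x y x' y' a ≠ theta x y x' y' b := by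
  have hd : (0:ℝ) < ‖x - y‖ := by rw [norm_pos_iff, sub_ne_zero]; exact h
  intro he
  unfold theta at he
  have hkey : a - b = (bump (‖b - x‖ * 4 / ‖x - y‖) - bump (‖a - x‖ * 4 / ‖x - y‖)) • (x' - x)
      + (bump (‖b - y‖ * 4 / ‖x - y‖) - bump (‖a - y‖ * 4 / ‖x - y‖)) • (y' - y) := by
    linear_combination (norm := module) he
  have hest : ∀ c : E3, |bump (‖b - c‖ * 4 / ‖x - y‖) - bump (‖a - c‖ * 4 / ‖x - y‖)|
      ≤ ‖a - b‖ * 4 / ‖x - y‖ := by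
    intro c
    have hnn : |‖b - c‖ - ‖a - c‖| ≤ ‖a - b‖ := by
      have h0 := abs_norm_sub_norm_le (b - c) (a - c)
      have h1 : (b - c) - (a - c) = b - a := by module
      rw [h1] at h0
      rwa [norm_sub_rev b a] at h0
    calc |bump (‖b - c‖ * 4 / ‖x - y‖) - bump (‖a - c‖ * 4 / ‖x - y‖)|
        ≤ |‖b - c‖ * 4 / ‖x - y‖ - ‖a - c‖ * 4 / ‖x - y‖| := bump_lip _ _
      _ = |‖b - c‖ - ‖a - c‖| * 4 / ‖x - y‖ := by
          rw [div_sub_div_same, ← sub_mul, abs_div, abs_mul]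
          simp [abs_of_pos hd]
      _ ≤ ‖a - b‖ * 4 / ‖x - y‖ := by gcongr
  have h1 : ‖a - b‖ ≤ ‖a - b‖ * 4 / ‖x - y‖ * (‖x' - x‖ + ‖y' - y‖) := by
    conv_lhs => rw [hkey]
    refine (norm_add_le _ _).trans ?_
    rw [norm_smul, norm_smul, Real.norm_eq_abs, Real.norm_eq_abs, mul_add]
    exact add_le_add (mul_le_mul_of_nonneg_right (hest x) (norm_nonneg _))
      (mul_le_mul_of_nonneg_right (hest y) (norm_nonneg _))
  have hsum : ‖x' - x‖ + ‖y' - y‖ ≤ ‖x - y‖ / 8 := by linarith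
  have h2 : ‖a - b‖ * 4 / ‖x - y‖ * (‖x' - x‖ + ‖y' - y‖) ≤ ‖a - b‖ / 2 := by
    calc ‖a - b‖ * 4 / ‖x - y‖ * (‖x' - x‖ + ‖y' - y‖)
        ≤ ‖a - b‖ * 4 / ‖x - y‖ * (‖x - y‖ / 8) := by gcongr
      _ = ‖a - b‖ / 2 := by field_simp; ring
  have hpos : (0:ℝ) < ‖a - b‖ := by rw [norm_pos_iff, sub_ne_zero]; exact hab
  linarith

lemma continuous_theta {A : Type} [TopologicalSpace A]
    {X Y X' Y' W : A → E3} (hX : Continuous X) (hY : Continuous Y) (hX' : Continuous X')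
    (hY' : Continuous Y') (hW : Continuous W) (hne : ∀ a, X a ≠ Y a) :
    Continuous fun a => theta (X a) (Y a) (X' a) (Y' a) (W a) := by
  have hd : ∀ a, ‖X a - Y a‖ ≠ 0 := fun a => by
    simpa [sub_eq_zero] using hne a
  unfold theta
  have hb : Continuous fun a => bump (‖W a - X a‖ * 4 / ‖X a - Y a‖) :=
    continuous_bump.comp (((hW.sub hX).norm.mul continuous_const).div (hX.sub hY).norm hd)
  have hb' : Continuous fun a => bump (‖W a - Y a‖ * 4 / ‖X a - Y a‖) :=
    continuous_bump.comp (((hW.sub hY).norm.mul continuous_const).div (hX.sub hY).norm hd)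
  exact (hW.add (hb.smul (hX'.sub hX))).add (hb'.smul (hY'.sub hY))

end Theta

section Lift

open unitInterval

lemma unit_le_one (t : I) : t ≤ 1 := le_one'
lemma unit_nonneg (t : I) : (0:I) ≤ t := nonneg'

/-- Homotopy lifting for the Fadell–Neuwirth fibration `Conf₃(ℝ³) → Conf₂(ℝ³)`,
with lifts stationary wherever the base homotopy is stationary. -/
lemma lift_exists {A : Type} [MetricSpace A] [CompactSpace A] [Nonempty A]
    (H : C(I × A, E3 × E3)) (hH : ∀ w, (H w).1 ≠ (H w).2)
    (f : A → E3) (hf : Continuous f)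
    (hf0 : ∀ a, f a ≠ (H (0, a)).1 ∧ f a ≠ (H (0, a)).2) :
    ∃ Z : I × A → E3, Continuous Z ∧ (∀ a, Z (0, a) = f a) ∧
      (∀ w, Z w ≠ (H w).1 ∧ Z w ≠ (H w).2) ∧
      (∀ a, (∀ t, H (t, a) = H (0, a)) → ∀ t, Z (t, a) = f a) := by
  classical
  -- minimal separation of the two moving points
  obtain ⟨w₀, -, hw₀⟩ := IsCompact.exists_isMinOn isCompact_univ Set.univ_nonempty
    (Continuous.continuousOn
      (show Continuous fun w : I × A => dist (H w).1 (H w).2 by fun_prop))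
  set d₀ : ℝ := dist (H w₀).1 (H w₀).2 with hd₀def
  have hd₀ : 0 < d₀ := dist_pos.2 (hH w₀)
  have hmin : ∀ w : I × A, d₀ ≤ dist (H w).1 (H w).2 := fun w => hw₀ (Set.mem_univ w)
  -- uniform continuity
  have hUC := CompactSpace.uniformContinuous_of_continuous H.continuous
  rw [Metric.uniformContinuous_iff] at hUC
  obtain ⟨δ, hδpos, hδ⟩ := hUC (d₀ / 32) (by positivity)
  obtain ⟨m, hm⟩ := exists_nat_one_div_lt hδpos
  -- the time grid
  set tj : ℕ → I := fun j => Set.projIcc (0:ℝ) 1 zero_le_one ((j : ℝ) / (m + 1)) with htjdef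
  have tj0 : tj 0 = 0 := by
    apply Subtype.ext
    simp [htjdef, Set.projIcc]
  have tjlast : tj (m + 1) = 1 := by
    apply Subtype.ext
    have : ((m:ℝ) + 1) / (m + 1) = 1 := div_self (by positivity)
    simp [htjdef, Set.projIcc, this]
  have tjmono : ∀ j : ℕ, tj j ≤ tj (j + 1) := by
    intro j
    apply Set.monotone_projIcc
    have h1 : (0:ℝ) < (m:ℝ) + 1 := by positivity
    rw [div_le_div_iff_of_pos_right h1]
    exact_mod_cast Nat.le_succ j
  have tjdist : ∀ j : ℕ, (tj (j+1) : ℝ) - (tj j : ℝ) ≤ 1 / (m + 1) := by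
    intro j
    have hlip := (LipschitzWith.projIcc (zero_le_one (α := ℝ))).dist_le_mul
      (((j:ℝ)+1) / (m + 1)) ((j:ℝ) / (m + 1))
    have hd : ((j:ℝ)+1)/(m+1) - (j:ℝ)/(m+1) = 1/(m+1) := by ring
    rw [NNReal.coe_one, one_mul, Real.dist_eq, hd, abs_of_nonneg (by positivity)] at hlip
    have h2 : dist (tj (j+1)) (tj j) ≤ 1 / (m+1) := by
      rw [htjdef]
      simpa [Nat.cast_succ] using hlip
    rw [Subtype.dist_eq, Real.dist_eq, abs_of_nonneg (by
      rw [sub_nonneg]; exact_mod_cast tjmono j)] at h2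
    exact h2
  -- main induction on time steps
  have main : ∀ j : ℕ, ∃ Z : I × A → E3, Continuous Z ∧
      (∀ w : I × A, Z w ≠ (H (min w.1 (tj j), w.2)).1 ∧ Z w ≠ (H (min w.1 (tj j), w.2)).2) ∧
      (∀ a, Z (0, a) = f a) ∧
      (∀ a, (∀ t, H (t, a) = H (0, a)) → ∀ t, Z (t, a) = f a) := by
    intro j
    induction j with
    | zero =>
      refine ⟨fun w => f w.2, hf.comp continuous_snd, ?_, fun a => rfl, fun a _ t => rfl⟩
      intro w
      rw [tj0, min_eq_right (unit_nonneg w.1)]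
      exact hf0 w.2
    | succ j ih =>
      obtain ⟨Z, hZc, hZne, hZ0, hZst⟩ := ih
      set c : I × A → I := fun w => max (tj j) (min w.1 (tj (j + 1))) with hcdef
      have hcc : Continuous c := by
        apply Continuous.max continuous_const
        exact Continuous.min continuous_fst continuous_const
      -- closeness estimate within one time step
      have hclose : ∀ w : I × A,
          ‖(H (c w, w.2)).1 - (H (tj j, w.2)).1‖ ≤
            ‖(H (tj j, w.2)).1 - (H (tj j, w.2)).2‖ / 16 ∧
          ‖(H (c w, w.2)).2 - (H (tj j, w.2)).2‖ ≤
            ‖(H (tj j, w.2)).1 - (H (tj j, w.2)).2‖ / 16 := by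
        intro w
        have hc1 : tj j ≤ c w := le_max_left _ _
        have hc2 : c w ≤ tj (j + 1) := by
          apply max_le (tjmono j)
          exact min_le_right _ _
        have hdist : dist (c w, w.2) ((tj j : I), w.2) < δ := by
          rw [Prod.dist_eq]
          simp only [dist_self]
          rw [max_eq_left dist_nonneg, Subtype.dist_eq, Real.dist_eq,
            abs_of_nonneg (by rw [sub_nonneg]; exact_mod_cast hc1)]
          calc (c w : ℝ) - (tj j : ℝ) ≤ (tj (j+1) : ℝ) - (tj j : ℝ) := by
                have := hc2
                rw [← Subtype.coe_le_coe] at this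
                linarith
            _ ≤ 1 / (m+1) := tjdist j
            _ < δ := hm
        have hHd := hδ hdist
        rw [Prod.dist_eq, max_lt_iff] at hHd
        have hsep : d₀ ≤ ‖(H (tj j, w.2)).1 - (H (tj j, w.2)).2‖ := by
          rw [← dist_eq_norm]; exact hmin _
        constructor
        · rw [← dist_eq_norm]
          exact (lt_of_lt_of_le hHd.1 (by linarith)).le
        · rw [← dist_eq_norm]
          exact (lt_of_lt_of_le hHd.2 (by linarith)).le
      refine ⟨fun w => theta (H (tj j, w.2)).1 (H (tj j, w.2)).2
          (H (c w, w.2)).1 (H (c w, w.2)).2 (Z w), ?_, ?_, ?_, ?_⟩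
      · apply continuous_theta
        · exact (continuous_fst.comp H.continuous).comp
            (continuous_const.prodMk continuous_snd)
        · exact (continuous_snd.comp H.continuous).comp
            (continuous_const.prodMk continuous_snd)
        · exact (continuous_fst.comp H.continuous).comp (hcc.prodMk continuous_snd)
        · exact (continuous_snd.comp H.continuous).comp (hcc.prodMk continuous_snd)
        · exact hZc
        · exact fun w => hH _
      · -- the non-collision property
        intro w
        simp only []
        rcases le_total w.1 (tj j) with hle | hle
        · have hcw : c w = tj j := by
            rw [hcdef]
            apply max_eq_left
            exact le_trans (min_le_left _ _) hle
          have hmin1 : min w.1 (tj (j+1)) = w.1 := min_eq_left (hle.trans (tjmono j))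
          have hmin2 : min w.1 (tj j) = w.1 := min_eq_left hle
          rw [hcw, theta_id, hmin1]
          have := hZne w
          rw [hmin2] at this
          exact this
        · have hcw : c w = min w.1 (tj (j+1)) := by
            rw [hcdef]
            apply max_eq_right
            exact le_min hle (tjmono j)
          have hmin2 : min w.1 (tj j) = tj j := min_eq_right hle
          have hZw := hZne w
          rw [hmin2] at hZw
          have hsep := hH (tj j, w.2)
          have hcl := hclose w
          rw [hcw] at hcl ⊢
          constructor
          · have := theta_inj hsep hcl.1 hcl.2 hZw.1
            rwa [theta_apply_x hsep] at this
          · have := theta_inj hsep hcl.1 hcl.2 hZw.2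
            rwa [theta_apply_y hsep] at this
      · -- value at time 0
        intro a
        simp only []
        have hc0 : c (0, a) = tj j := by
          rw [hcdef]
          apply max_eq_left
          exact le_trans (min_le_left _ _) (unit_nonneg _)
        rw [hc0, theta_id]
        exact hZ0 a
      · -- stationarity
        intro a hst t
        simp only []
        have h1 : H (c (t, a), a) = H ((tj j : I), a) := by
          rw [hst (c (t,a)), hst (tj j)]
        rw [h1, theta_id]
        exact hZst a hst t
  obtain ⟨Z, hZc, hZne, hZ0, hZst⟩ := main (m + 1)
  refine ⟨Z, hZc, hZ0, ?_, hZst⟩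
  intro w
  have := hZne w
  rw [tjlast, min_eq_left (unit_le_one w.1)] at this
  exact this

end Lift


section Maps

open GenLoop

/-- The Fadell–Neuwirth projection `Conf₃ → Conf₂`, forgetting the third point. -/
def pmap : C(Conf3, Conf2) :=
  ⟨fun w => ⟨(w.1.1, w.1.2.1), w.2.1⟩, by
    apply Continuous.subtype_mk
    exact (continuous_fst.comp continuous_subtype_val).prodMk
      (continuous_fst.comp (continuous_snd.comp continuous_subtype_val))⟩

/-- A section of the Fadell–Neuwirth projection: add the point `2y - x`. -/
def smap : C(Conf2, Conf3) :=
  ⟨fun w => ⟨(w.1.1, w.1.2, (2:ℝ) • w.1.2 - w.1.1), by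
      refine ⟨w.2, ?_, ?_⟩
      · intro h
        apply w.2
        have h2 : (2:ℝ) • (w.1.1 - w.1.2) = 0 := by
          linear_combination (norm := module) h
        rw [smul_eq_zero] at h2
        rcases h2 with h2 | h2
        · norm_num at h2
        · rwa [sub_eq_zero] at h2
      · intro h
        apply w.2
        have h2 : w.1.1 - w.1.2 = 0 := by
          linear_combination (norm := module) h
        rwa [sub_eq_zero] at h2⟩, by
    apply Continuous.subtype_mk
    refine (continuous_fst.comp continuous_subtype_val).prodMk (Continuous.prodMk ?_ ?_)
    · exact continuous_snd.comp continuous_subtype_val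
    · exact ((continuous_const (y := (2:ℝ))).smul (continuous_snd.comp continuous_subtype_val :
          Continuous fun w : Conf2 => w.1.2)).sub
        (continuous_fst.comp continuous_subtype_val)⟩

/-- The fiber inclusion `ℝ³ ∖ {q₁, q₂} → Conf₃`. -/
def imap : C(Fib, Conf3) :=
  ⟨fun z => ⟨(q1, q2, z.1), q1_ne_q2, (z.2.1).symm, (z.2.2).symm⟩, by
    apply Continuous.subtype_mk
    exact continuous_const.prodMk (continuous_const.prodMk continuous_subtype_val)⟩

lemma hp : pmap base3 = base2 := rfl

lemma hi : imap baseF = base3 := rfl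

lemma hs : smap base2 = base3 := by
  apply Subtype.ext
  show ((q1 : E3), (q2 : E3), (2:ℝ) • q2 - q1) = ((q1 : E3), q2, q3)
  have h : (2:ℝ) • q2 - q1 = q3 := by
    rw [q1, q2, q3, sub_zero, smul_smul]
    norm_num
  rw [h]

lemma pmap_smap (w : Conf2) : pmap (smap w) = w := Subtype.ext rfl

lemma pmap_imap (z : Fib) : pmap (imap z) = base2 := Subtype.ext rfl

end Maps

section Claims

open GenLoop

variable {k : ℕ}

/-- Elements of the kernel of `p⁎` are in the image of `i⁎`. -/
lemma claimA [Nonempty (Fin k)] (α : HomotopyGroup (Fin k) Conf3 base3)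
    (hα : piMap pmap hp α = 1) : ∃ b, piMap imap hi b = α := by
  induction α using Quotient.inductionOn with | _ γ =>
  rw [piMap_mk, HomotopyGroup.one_def] at hα
  have hγ : GenLoop.Homotopic (glMap pmap hp γ) GenLoop.const := Quotient.exact hα
  obtain ⟨Hty⟩ := hγ
  -- the underlying homotopy, valued in `ℝ³ × ℝ³`
  set Hc : (I × (I^(Fin k))) → E3 × E3 := fun w => ((Hty w : Conf2) : E3 × E3) with hHcdef
  have hHcc : Continuous Hc := continuous_subtype_val.comp Hty.continuous
  have hH : ∀ w, (Hc w).1 ≠ (Hc w).2 := fun w => (Hty w).2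
  set f : (I^(Fin k)) → E3 := fun a => (γ a).1.2.2 with hfdef
  have hfc : Continuous f := by
    have : Continuous fun u : Conf3 => u.1.2.2 :=
      continuous_snd.comp (continuous_snd.comp continuous_subtype_val)
    exact this.comp γ.1.continuous
  have hHc0 : ∀ a, Hc (0, a) = ((γ a).1.1, (γ a).1.2.1) := by
    intro a
    rw [hHcdef]
    simp only [Hty.apply_zero]
    rfl
  have hHc1 : ∀ a, Hc (1, a) = ((q1 : E3), (q2 : E3)) := by
    intro a
    rw [hHcdef]
    simp only [Hty.apply_one]
    rfl
  have hstat : ∀ a ∈ Cube.boundary (Fin k), ∀ t, Hc (t, a) = Hc (0, a) := by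
    intro a ha t
    rw [hHcdef]
    simp only [Hty.eq_fst t ha, Hty.eq_fst 0 ha]
  obtain ⟨Z, hZc, hZ0, hZne, hZst⟩ := lift_exists ⟨Hc, hHcc⟩ hH f hfc (by
    intro a
    rw [ContinuousMap.coe_mk, hHc0 a, hfdef]
    exact ⟨(γ a).2.2.1.symm, (γ a).2.2.2.symm⟩)
  simp only [ContinuousMap.coe_mk] at hZne hZst
  -- the end of the lifted homotopy is a loop in the fiber
  have hgne : ∀ a, Z (1, a) ≠ q1 ∧ Z (1, a) ≠ q2 := by
    intro a
    have := hZne (1, a)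
    rw [hHc1 a] at this
    exact this
  set g : Ω^ (Fin k) Fib baseF := ⟨⟨fun a => ⟨Z (1, a), hgne a⟩, by
      apply Continuous.subtype_mk
      exact hZc.comp (continuous_const.prodMk continuous_id)⟩, by
    intro a ha
    apply Subtype.ext
    show Z (1, a) = q3
    have h1 := hZst a (hstat a ha) 1
    rw [h1]
    show (γ a).1.2.2 = q3
    have h2 := GenLoop.boundary γ a ha
    rw [h2]
    rfl⟩ with hgdef
  -- the homotopy from `γ` to `i ∘ g` in `Conf₃`
  set L : C(I × (I^(Fin k)), Conf3) := ⟨fun w => ⟨((Hc w).1, (Hc w).2, Z w),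
      hH w, (hZne w).1.symm, (hZne w).2.symm⟩, by
    apply Continuous.subtype_mk
    exact (continuous_fst.comp hHcc).prodMk ((continuous_snd.comp hHcc).prodMk hZc)⟩
    with hLdef
  have hhom : GenLoop.Homotopic γ (glMap imap hi g) := by
    refine ⟨⟨⟨L, ?_, ?_⟩, ?_⟩⟩
    · intro a
      apply Subtype.ext
      show ((Hc (0,a)).1, (Hc (0,a)).2, Z (0,a)) = (γ a).1
      rw [hHc0 a, hZ0 a]
    · intro a
      apply Subtype.ext
      show ((Hc (1,a)).1, (Hc (1,a)).2, Z (1,a)) = (imap (g a)).1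
      rw [hHc1 a]
      rfl
    · intro t a ha
      apply Subtype.ext
      show ((Hc (t,a)).1, (Hc (t,a)).2, Z (t,a)) = (γ a).1
      rw [hstat a ha t, hHc0 a, hZst a (hstat a ha) t]
  exact ⟨⟦g⟧, Quotient.sound hhom.symm⟩

end Claims

section ClaimB

open GenLoop unitInterval

variable {k : ℕ}

/-- The induced map `i⁎` is injective. -/
lemma claimB [Nonempty (Fin k)] (b : HomotopyGroup (Fin k) Fib baseF)
    (hb : piMap imap hi b = 1) : b = 1 := by
  induction b using Quotient.inductionOn with | _ g =>
  rw [piMap_mk, HomotopyGroup.one_def] at hb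
  obtain ⟨G⟩ := (Quotient.exact hb : GenLoop.Homotopic (glMap imap hi g) GenLoop.const)
  -- tent reparametrization of the unit interval
  set tri : I → I := fun t => ⟨max 0 (min 1 (min (2*(t:ℝ)) (2-2*(t:ℝ)))),
    le_max_left _ _, max_le zero_le_one (min_le_left _ _)⟩ with htridef
  have htric : Continuous tri := by
    apply Continuous.subtype_mk
    fun_prop
  have tri0 : tri 0 = 0 := by apply Subtype.ext; show max 0 _ = 0; norm_num
  have tri1 : tri 1 = 0 := by apply Subtype.ext; show max 0 _ = 0; norm_num
  have trihalf : ∀ t : I, (t:ℝ) = 1/2 → tri t = 1 := by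
    intro t ht
    apply Subtype.ext
    show max 0 (min 1 (min (2*(t:ℝ)) (2-2*(t:ℝ)))) = 1
    rw [ht]
    norm_num
  -- the concatenated homotopy `W = G ⬝ (s ∘ p ∘ G)⁻¹`
  set W : I × (I^(Fin k)) → Conf3 := fun w =>
    if (w.1 : ℝ) ≤ 1/2 then G (tri w.1, w.2) else smap (pmap (G (tri w.1, w.2))) with hWdef
  have hGt : Continuous fun w : I × (I^(Fin k)) => G (tri w.1, w.2) :=
    G.continuous.comp ((htric.comp continuous_fst).prodMk continuous_snd)
  have hWc : Continuous W := by
    apply Continuous.if_le hGt ((smap.continuous.comp pmap.continuous).comp hGt)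
      (continuous_subtype_val.comp continuous_fst) continuous_const
    intro w hw
    show G (tri w.1, w.2) = smap (pmap (G (tri w.1, w.2)))
    rw [trihalf _ hw, G.apply_one]
    show base3 = smap (pmap base3)
    rw [hp, hs]
  -- the contracted base homotopy
  set K : I × (I × (I^(Fin k))) → E3 × E3 := fun v =>
    ((pmap (G (min (tri v.2.1) (σ v.1), v.2.2)) : Conf2) : E3 × E3) with hKdef
  have hKc : Continuous K := by
    apply continuous_subtype_val.comp
    apply pmap.continuous.comp
    apply G.continuous.comp
    apply Continuous.prodMk
    · apply Continuous.min
      · exact htric.comp (continuous_fst.comp continuous_snd)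
      · exact continuous_symm.comp continuous_fst
    · exact continuous_snd.comp continuous_snd
  have hKH : ∀ v, (K v).1 ≠ (K v).2 := fun v => (pmap (G _)).2
  -- initial lift
  set f0 : (I × (I^(Fin k))) → E3 := fun w => (W w).1.2.2 with hf0def
  have hf0c : Continuous f0 :=
    (continuous_snd.comp (continuous_snd.comp continuous_subtype_val)).comp hWc
  have hK0 : ∀ w : I × (I^(Fin k)), K (0, w) = ((W w).1.1, (W w).1.2.1) := by
    intro w
    have h1 : min (tri w.1) (σ (0:I)) = tri w.1 := by
      rw [symm_zero]
      exact min_eq_left le_one'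
    show ((pmap (G (min (tri w.1) (σ (0:I)), w.2)) : Conf2) : E3 × E3) = _
    rw [h1]
    simp only [hWdef]
    by_cases hw : (w.1 : ℝ) ≤ 1/2
    · rw [if_pos hw]; rfl
    · rw [if_neg hw]; rfl
  have hK1 : ∀ w : I × (I^(Fin k)), K (1, w) = ((q1:E3), (q2:E3)) := by
    intro w
    have h1 : min (tri w.1) (σ (1:I)) = 0 := by
      rw [symm_one]
      exact min_eq_right nonneg'
    show ((pmap (G (min (tri w.1) (σ (1:I)), w.2)) : Conf2) : E3 × E3) = _
    rw [h1, G.apply_zero]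
    rfl
  -- stationarity of `K` on the relevant parts of the boundary
  have hstat0 : ∀ a : I^(Fin k), ∀ s, K (s, (0, a)) = K (0, (0, a)) := by
    intro a s
    show ((pmap (G (min (tri 0) (σ s), a)) : Conf2) : E3 × E3)
      = ((pmap (G (min (tri 0) (σ (0:I)), a)) : Conf2) : E3 × E3)
    rw [tri0, min_eq_left nonneg', min_eq_left nonneg']
  have hstat1 : ∀ a : I^(Fin k), ∀ s, K (s, (1, a)) = K (0, (1, a)) := by
    intro a s
    show ((pmap (G (min (tri 1) (σ s), a)) : Conf2) : E3 × E3)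
      = ((pmap (G (min (tri 1) (σ (0:I)), a)) : Conf2) : E3 × E3)
    rw [tri1, min_eq_left nonneg', min_eq_left nonneg']
  have hstatb : ∀ t : I, ∀ a ∈ Cube.boundary (Fin k), ∀ s,
      K (s, (t, a)) = K (0, (t, a)) := by
    intro t a ha s
    show ((pmap (G (min (tri t) (σ s), a)) : Conf2) : E3 × E3)
      = ((pmap (G (min (tri t) (σ (0:I)), a)) : Conf2) : E3 × E3)
    rw [G.eq_fst _ ha, G.eq_fst _ ha]
  obtain ⟨Z, hZc, hZ0, hZne, hZst⟩ := lift_exists ⟨K, hKc⟩ hKH f0 hf0c (by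
    intro w
    rw [ContinuousMap.coe_mk, hK0 w, hf0def]
    exact ⟨(W w).2.2.1.symm, (W w).2.2.2.symm⟩)
  simp only [ContinuousMap.coe_mk] at hZne hZst
  -- the final slice of the lift is a nullhomotopy of `g` in the fiber
  have hVne : ∀ w : I × (I^(Fin k)), Z (1, w) ≠ q1 ∧ Z (1, w) ≠ q2 := by
    intro w
    have := hZne (1, w)
    rw [hK1 w] at this
    exact this
  have hWz0 : ∀ a : I^(Fin k), f0 (0, a) = (g a).1 := by
    intro a
    rw [hf0def]
    show (W (0, a)).1.2.2 = (g a).1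
    simp only [hWdef]
    have : ((0:I) : ℝ) ≤ 1/2 := by norm_num
    rw [if_pos this, tri0, G.apply_zero]
    rfl
  have hWz1 : ∀ a : I^(Fin k), f0 (1, a) = q3 := by
    intro a
    rw [hf0def]
    show (W (1, a)).1.2.2 = q3
    simp only [hWdef]
    have : ¬ ((1:I) : ℝ) ≤ 1/2 := by norm_num
    rw [if_neg this, tri1, G.apply_zero]
    show (smap (pmap (imap (g a)))).1.2.2 = q3
    rw [pmap_imap, hs]
    rfl
  have hWzb : ∀ t : I, ∀ a ∈ Cube.boundary (Fin k), f0 (t, a) = (g a).1 := by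
    intro t a ha
    rw [hf0def]
    show (W (t, a)).1.2.2 = (g a).1
    simp only [hWdef]
    by_cases hw : ((t:I) : ℝ) ≤ 1/2
    · rw [if_pos hw, G.eq_fst _ ha]
      rfl
    · rw [if_neg hw, G.eq_fst _ ha]
      show (smap (pmap (imap (g a)))).1.2.2 = (g a).1
      rw [pmap_imap, hs]
      have h2 := GenLoop.boundary g a ha
      rw [h2]
      rfl
  have hhom : GenLoop.Homotopic g GenLoop.const := by
    refine ⟨⟨⟨⟨fun w => ⟨Z (1, w), hVne w⟩, ?_⟩, ?_, ?_⟩, ?_⟩⟩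
    · apply Continuous.subtype_mk
      exact hZc.comp (continuous_const.prodMk continuous_id)
    · intro a
      apply Subtype.ext
      show Z (1, (0, a)) = (g a).1
      rw [hZst (0, a) (hstat0 a) 1, hWz0 a]
    · intro a
      apply Subtype.ext
      show Z (1, (1, a)) = (GenLoop.const a : Fib).1
      rw [hZst (1, a) (hstat1 a) 1, hWz1 a]
      rfl
    · intro t a ha
      apply Subtype.ext
      show Z (1, (t, a)) = (g a).1
      rw [hZst (t, a) (hstatb t a ha) 1, hWzb t a ha]
  rw [HomotopyGroup.one_def]
  exact Quotient.sound hhom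

end ClaimB

section Assembly

open GenLoop

variable {k : ℕ}

lemma pi_ps [Nonempty (Fin k)] (a : HomotopyGroup (Fin k) Conf2 base2) :
    piMap pmap hp (piMap smap hs a) = a := by
  induction a using Quotient.inductionOn with | _ f =>
  rw [piMap_mk, piMap_mk]
  congr 1

lemma pi_pi [Nonempty (Fin k)] (b : HomotopyGroup (Fin k) Fib baseF) :
    piMap pmap hp (piMap imap hi b) = 1 := by
  induction b using Quotient.inductionOn with | _ f =>
  rw [piMap_mk, piMap_mk, HomotopyGroup.one_def]
  congr 1

end Assembly

/-- For every `k ≥ 2` there is a group isomorphism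
`π_k(Conf₃(ℝ³)) ≅ π_k(Conf₂(ℝ³)) × π_k(ℝ³ ∖ {q₁, q₂})`, the homotopy groups being taken at
the basepoints `(q₁,q₂,q₃)`, `(q₁,q₂)` and `q₃` respectively. -/
theorem homotopy_groups_conf3_split : ∀ k : ℕ, ∀ _hk : 2 ≤ k,
    haveI : Nonempty (Fin k) := ⟨⟨0, by omega⟩⟩
    Nonempty ((π_ k Conf3 base3) ≃* ((π_ k Conf2 base2) × (π_ k Fib baseF))) := by
  intro k hk
  haveI hne : Nonempty (Fin k) := ⟨⟨0, by omega⟩⟩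
  haveI hnt : Nontrivial (Fin k) := by
    refine ⟨⟨0, by omega⟩, ⟨1, by omega⟩, ?_⟩
    intro h
    have := congrArg Fin.val h
    simp at this
  -- the candidate isomorphism `(a, b) ↦ s⁎ a * i⁎ b`
  have hmul : ∀ x y : (π_ k Conf2 base2) × (π_ k Fib baseF),
      piMap smap hs (x * y).1 * piMap imap hi (x * y).2
        = (piMap smap hs x.1 * piMap imap hi x.2)
          * (piMap smap hs y.1 * piMap imap hi y.2) := by
    rintro ⟨a, b⟩ ⟨c, d⟩
    show piMap smap hs (a * c) * piMap imap hi (b * d) = _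
    rw [piMap_mul, piMap_mul]
    exact mul_mul_mul_comm _ _ _ _
  set Φ : ((π_ k Conf2 base2) × (π_ k Fib baseF)) →* (π_ k Conf3 base3) :=
    MonoidHom.mk' (fun x => piMap smap hs x.1 * piMap imap hi x.2) hmul with hΦdef
  have hproj : ∀ x : (π_ k Conf2 base2) × (π_ k Fib baseF),
      piMap pmap hp (Φ x) = x.1 := by
    rintro ⟨a, b⟩
    show piMap pmap hp (piMap smap hs a * piMap imap hi b) = a
    rw [piMap_mul, pi_ps, pi_pi, mul_one]
  have hinj : Function.Injective Φ := by
    rw [injective_iff_map_eq_one]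
    rintro ⟨a, b⟩ hab
    have h1 : a = 1 := by
      have := hproj (a, b)
      rw [hab, piMap_one] at this
      exact this.symm
    subst h1
    have h2 : piMap imap hi b = 1 := by
      have : piMap smap hs (1 : π_ k Conf2 base2) * piMap imap hi b = 1 := hab
      rwa [piMap_one, one_mul] at this
    have h3 : b = 1 := claimB b h2
    rw [h3]
    rfl
  have hsurj : Function.Surjective Φ := by
    intro α
    set a := piMap pmap hp α with hadef
    have h1 : piMap pmap hp ((piMap smap hs a)⁻¹ * α) = 1 := by
      have hinv := map_inv (piHom pmap hp) (piMap smap hs a)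
      simp only [piHom, MonoidHom.mk'_apply] at hinv
      rw [piMap_mul, hinv, pi_ps, hadef]
      exact inv_mul_cancel _
    obtain ⟨b, hb⟩ := claimA ((piMap smap hs a)⁻¹ * α) h1
    refine ⟨(a, b), ?_⟩
    show piMap smap hs a * piMap imap hi b = α
    rw [hb, mul_inv_cancel_left]
  exact ⟨(MulEquiv.ofBijective Φ ⟨hinj, hsurj⟩).symm⟩
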